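/- arXiv:1812.00592 — 3 statements merged into one kernel-verified Lean document; each statement's English description precedes it below -/
import Mathlib

section
/- Let Ω ⊆ ℝ² be a bounded domain and φ ∈ C⁰(∂Ω). There is a constant C₁, depending only on Ω and φ, such that every solution u ∈ C²(Ω) ∩ C⁰(closure Ω) of the translating soliton equation div(Du/√(1+|Du|²)) = 1/√(1+|Du|²) in Ω with u = φ on ∂Ω satisfies C₁ ≤ u ≤ max_{∂Ω} φ in Ω. -/
open Real Set Filter

/-- First partial derivative of `u` with respect to `x`. -/
noncomputable def pdx (u : ℝ × ℝ → ℝ) (p : ℝ × ℝ) : ℝ := fderiv ℝ u p ((1, 0) : ℝ × ℝ)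

/-- First partial derivative of `u` with respect to `y`. -/
noncomputable def pdy (u : ℝ × ℝ → ℝ) (p : ℝ × ℝ) : ℝ := fderiv ℝ u p ((0, 1) : ℝ × ℝ)

/-- `|Du|²`, the squared norm of the gradient of `u`. -/
noncomputable def gradSq (u : ℝ × ℝ → ℝ) (p : ℝ × ℝ) : ℝ := (pdx u p) ^ 2 + (pdy u p) ^ 2

/-- `√(1+|Du|²)`. -/
noncomputable def Wg (u : ℝ × ℝ → ℝ) (p : ℝ × ℝ) : ℝ := Real.sqrt (1 + gradSq u p)

/-- `div (Du / √(1+|Du|²))`. -/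
noncomputable def divW (u : ℝ × ℝ → ℝ) (p : ℝ × ℝ) : ℝ :=
  pdx (fun q => pdx u q / Wg u q) p + pdy (fun q => pdy u q / Wg u q) p

lemma gradSq_nonneg (u : ℝ × ℝ → ℝ) (p : ℝ × ℝ) : 0 ≤ gradSq u p :=
  add_nonneg (sq_nonneg _) (sq_nonneg _)

lemma Wg_pos (u : ℝ × ℝ → ℝ) (p : ℝ × ℝ) : 0 < Wg u p :=
  Real.sqrt_pos.mpr (by linarith [gradSq_nonneg u p])

lemma Wg_sq (u : ℝ × ℝ → ℝ) (p : ℝ × ℝ) : (Wg u p) ^ 2 = 1 + gradSq u p :=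
  Real.sq_sqrt (by linarith [gradSq_nonneg u p])

lemma second_test_1d {f : ℝ → ℝ} {c : ℝ}
    (hf : ∀ᶠ t in nhds (0:ℝ), DifferentiableAt ℝ f t)
    (hf' : HasDerivAt (deriv f) c 0) (hmin : IsLocalMin f 0) : 0 ≤ c := by
  by_contra hc
  push_neg at hc
  have h0 : deriv f 0 = 0 := hmin.deriv_eq_zero
  have hslope : Tendsto (slope (deriv f) 0) (nhdsWithin 0 {(0:ℝ)}ᶜ) (nhds c) :=
    hasDerivAt_iff_tendsto_slope.mp hf'
  have hslope' : Tendsto (slope (deriv f) 0) (nhdsWithin 0 (Ioi 0)) (nhds c) :=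
    hslope.mono_left (nhdsWithin_mono _ (fun t ht => ne_of_gt ht))
  have hneg : ∀ᶠ t in nhdsWithin (0:ℝ) (Ioi 0), deriv f t < 0 := by
    have h1 : ∀ᶠ t in nhdsWithin (0:ℝ) (Ioi 0), slope (deriv f) 0 t < 0 :=
      hslope'.eventually_lt_const hc
    have h2 : ∀ᶠ t in nhdsWithin (0:ℝ) (Ioi 0), (0:ℝ) < t :=
      eventually_mem_nhdsWithin
    filter_upwards [h1, h2] with t h1 h2
    have : slope (deriv f) 0 t = deriv f t / t := by
      simp [slope_def_field, h0]
    rw [this] at h1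
    exact (div_neg_iff.mp h1).resolve_left (fun h => absurd h2 (not_lt.mpr h.2.le)) |>.1
  obtain ⟨δ₂, hδ₂pos, hδ₂⟩ := mem_nhdsGT_iff_exists_Ioc_subset.mp hneg
  have hE : ∀ᶠ t in nhds (0:ℝ), DifferentiableAt ℝ f t ∧ f 0 ≤ f t := hf.and hmin
  obtain ⟨ε, hεpos, hε⟩ := Metric.eventually_nhds_iff.mp hE
  set δ := min (ε/2) δ₂ with hδ
  have hδpos : 0 < δ := lt_min (by linarith) hδ₂pos
  have hmem : ∀ t ∈ Icc (0:ℝ) δ, DifferentiableAt ℝ f t ∧ f 0 ≤ f t := by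
    intro t ht
    apply hε
    rw [Real.dist_eq, sub_zero, abs_of_nonneg ht.1]
    calc t ≤ δ := ht.2
    _ ≤ ε/2 := min_le_left _ _
    _ < ε := by linarith
  have hanti : StrictAntiOn f (Icc 0 δ) := by
    apply strictAntiOn_of_deriv_neg (convex_Icc _ _)
    · exact fun t ht => (hmem t ht).1.continuousAt.continuousWithinAt
    · intro t ht
      rw [interior_Icc] at ht
      exact hδ₂ ⟨ht.1, le_trans ht.2.le (min_le_right _ _)⟩
  have : f δ < f 0 := hanti ⟨le_refl 0, hδpos.le⟩ ⟨hδpos.le, le_refl δ⟩ hδpos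
  exact absurd (hmem δ ⟨hδpos.le, le_refl δ⟩).2 (not_le.mpr this)

lemma second_test_dir {w : ℝ × ℝ → ℝ} {q : ℝ × ℝ} (e : ℝ × ℝ)
    (hw : ∀ᶠ r in nhds q, DifferentiableAt ℝ w r)
    (hw2 : DifferentiableAt ℝ (fun r => fderiv ℝ w r e) q)
    (hmin : IsLocalMin w q) : 0 ≤ fderiv ℝ (fun r => fderiv ℝ w r e) q e := by
  set L : ℝ → ℝ × ℝ := fun t => q + t • e with hL
  have hline : ∀ t : ℝ, HasDerivAt L e t := by
    intro t
    have := ((hasDerivAt_id' t).smul_const e).const_add q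
    simpa only [one_smul] using this
  have hLcont : Continuous L := by fun_prop
  have hL0 : L 0 = q := by simp [hL]
  have htend : Tendsto L (nhds 0) (nhds q) := by
    rw [← hL0]; exact hLcont.continuousAt
  set f : ℝ → ℝ := fun t => w (L t) with hf
  have hfd : ∀ᶠ t in nhds (0:ℝ), HasDerivAt f (fderiv ℝ w (L t) e) t := by
    filter_upwards [htend.eventually hw] with t ht
    exact ht.hasFDerivAt.comp_hasDerivAt t (hline t)
  have hderiv : (deriv f) =ᶠ[nhds (0:ℝ)] fun t => fderiv ℝ w (L t) e := by
    filter_upwards [hfd] with t ht using ht.deriv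
  have hg : HasDerivAt (fun t => fderiv ℝ w (L t) e) (fderiv ℝ (fun r => fderiv ℝ w r e) q e) 0 := by
    have h2 : HasFDerivAt (fun r => fderiv ℝ w r e) (fderiv ℝ (fun r => fderiv ℝ w r e) q) (L 0) := by
      rw [hL0]; exact hw2.hasFDerivAt
    exact h2.comp_hasDerivAt 0 (hline 0)
  have hf' : HasDerivAt (deriv f) (fderiv ℝ (fun r => fderiv ℝ w r e) q e) 0 :=
    hg.congr_of_eventuallyEq hderiv
  have hfmin : IsLocalMin f 0 := by
    have : ∀ᶠ t in nhds (0:ℝ), w q ≤ w (L t) := htend.eventually hmin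
    simpa [IsLocalMin, IsMinFilter, hf, hL0] using this
  exact second_test_1d (hfd.mono fun t ht => ht.differentiableAt) hf' hfmin

lemma second_test_dir_max {u : ℝ × ℝ → ℝ} {q : ℝ × ℝ} (e : ℝ × ℝ)
    (hw : ∀ᶠ r in nhds q, DifferentiableAt ℝ u r)
    (hw2 : DifferentiableAt ℝ (fun r => fderiv ℝ u r e) q)
    (hmax : IsLocalMax u q) : fderiv ℝ (fun r => fderiv ℝ u r e) q e ≤ 0 := by
  have hneg : (fun r => fderiv ℝ (fun x => -u x) r e) = fun r => -(fderiv ℝ u r e) := by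
    funext r; rw [fderiv_fun_neg]; simp
  have h := second_test_dir (w := fun x => -u x) e (hw.mono fun r hr => hr.neg)
    (by rw [hneg]; exact hw2.neg) hmax.neg
  rw [hneg] at h
  have h2 : fderiv ℝ (fun r => -(fderiv ℝ u r e)) q = -(fderiv ℝ (fun r => fderiv ℝ u r e) q) :=
    fderiv_neg
  rw [h2] at h
  simp only [ContinuousLinearMap.neg_apply] at h
  linarith

lemma alg_divW (a b s g1 g2 W : ℝ) (hW : 0 < W) (hW2 : W^2 = 1+g1^2+g2^2) :
 (g1 * ((-(W^2)⁻¹) * ((1/(2*W)) * (2*g1*a + 2*g2*s))) + W⁻¹*a)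
 + (g2 * ((-(W^2)⁻¹) * ((1/(2*W)) * (2*g1*s + 2*g2*b))) + W⁻¹*b)
 = ((1+g2^2)*a + (1+g1^2)*b - 2*g1*g2*s)/W^3 := by
  have h : W ≠ 0 := hW.ne'
  field_simp
  linear_combination (a+b) * hW2

lemma divW_formula {u : ℝ × ℝ → ℝ} {Ω : Set (ℝ × ℝ)} (hΩo : IsOpen Ω)
    (hu : ContDiffOn ℝ 2 u Ω) {p : ℝ × ℝ} (hp : p ∈ Ω) :
    divW u p = ((1 + (pdy u p)^2) * (fderiv ℝ (fderiv ℝ u) p (1,0) (1,0))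
      + (1 + (pdx u p)^2) * (fderiv ℝ (fderiv ℝ u) p (0,1) (0,1))
      - 2 * pdx u p * pdy u p * (fderiv ℝ (fderiv ℝ u) p (1,0) (0,1))) / (Wg u p)^3 := by
  have hnb : Ω ∈ nhds p := hΩo.mem_nhds hp
  have hCA : ContDiffAt ℝ 2 u p := (hu p hp).contDiffAt hnb
  have hfd : DifferentiableAt ℝ (fderiv ℝ u) p :=
    (hCA.fderiv_right (m := 1) (by norm_num)).differentiableAt (by norm_num)
  set H := fderiv ℝ (fderiv ℝ u) p with hH
  have hsym : H (0,1) (1,0) = H (1,0) (0,1) := (hCA.isSymmSndFDerivAt (by norm_num)) _ _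
  have hux : HasFDerivAt (pdx u) (H.flip ((1,0) : ℝ × ℝ)) p := by
    have h := hfd.hasFDerivAt.clm_apply (hasFDerivAt_const ((1,0) : ℝ × ℝ) p)
    simp at h
    exact h
  have huy : HasFDerivAt (pdy u) (H.flip ((0,1) : ℝ × ℝ)) p := by
    have h := hfd.hasFDerivAt.clm_apply (hasFDerivAt_const ((0,1) : ℝ × ℝ) p)
    simp at h
    exact h
  have hG : HasFDerivAt (gradSq u)
      ((2 * pdx u p) • H.flip ((1,0) : ℝ × ℝ) + (2 * pdy u p) • H.flip ((0,1) : ℝ × ℝ)) p := by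
    have h := (hux.mul hux).add (huy.mul huy)
    have e : ∀ v : ℝ × ℝ, gradSq u v = pdx u v * pdx u v + pdy u v * pdy u v := by
      intro v; unfold gradSq; ring
    simp only [funext e] at h ⊢
    exact h.congr_fderiv (by module)
  have h1G : HasFDerivAt (fun q => 1 + gradSq u q)
      ((2 * pdx u p) • H.flip ((1,0) : ℝ × ℝ) + (2 * pdy u p) • H.flip ((0,1) : ℝ × ℝ)) p := by
    exact hG.const_add 1
  have hWpos := Wg_pos u p
  have hW : HasFDerivAt (Wg u)
      ((1 / (2 * Wg u p)) • ((2 * pdx u p) • H.flip ((1,0) : ℝ × ℝ)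
        + (2 * pdy u p) • H.flip ((0,1) : ℝ × ℝ))) p := by
    have hne : (1 + gradSq u p) ≠ 0 := by linarith [gradSq_nonneg u p]
    have := (Real.hasDerivAt_sqrt hne).comp_hasFDerivAt p h1G
    exact this
  have hinv : HasFDerivAt (fun q => (Wg u q)⁻¹)
      ((-((Wg u p) ^ 2)⁻¹) • ((1 / (2 * Wg u p)) • ((2 * pdx u p) • H.flip ((1,0) : ℝ × ℝ)
        + (2 * pdy u p) • H.flip ((0,1) : ℝ × ℝ)))) p :=
    (hasDerivAt_inv hWpos.ne').comp_hasFDerivAt p hW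
  have hq1 : HasFDerivAt (fun q => pdx u q / Wg u q)
      (pdx u p • ((-((Wg u p) ^ 2)⁻¹) • ((1 / (2 * Wg u p)) • ((2 * pdx u p) • H.flip ((1,0) : ℝ × ℝ)
        + (2 * pdy u p) • H.flip ((0,1) : ℝ × ℝ)))) + (Wg u p)⁻¹ • H.flip ((1,0) : ℝ × ℝ)) p := by
    have h := hux.mul hinv
    simp [div_eq_mul_inv] at h ⊢
    exact h
  have hq2 : HasFDerivAt (fun q => pdy u q / Wg u q)
      (pdy u p • ((-((Wg u p) ^ 2)⁻¹) • ((1 / (2 * Wg u p)) • ((2 * pdx u p) • H.flip ((1,0) : ℝ × ℝ)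
        + (2 * pdy u p) • H.flip ((0,1) : ℝ × ℝ)))) + (Wg u p)⁻¹ • H.flip ((0,1) : ℝ × ℝ)) p := by
    have h := huy.mul hinv
    simp [div_eq_mul_inv] at h ⊢
    exact h
  have e1 : pdx (fun q => pdx u q / Wg u q) p
      = pdx u p * ((-((Wg u p) ^ 2)⁻¹) * ((1 / (2 * Wg u p)) * (2 * pdx u p * H (1,0) (1,0)
        + 2 * pdy u p * H (1,0) (0,1)))) + (Wg u p)⁻¹ * H (1,0) (1,0) := by
    show fderiv ℝ (fun q => pdx u q / Wg u q) p ((1,0) : ℝ × ℝ) = _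
    rw [hq1.fderiv]
    simp [ContinuousLinearMap.flip_apply, smul_eq_mul]
    ring
  have e2 : pdy (fun q => pdy u q / Wg u q) p
      = pdy u p * ((-((Wg u p) ^ 2)⁻¹) * ((1 / (2 * Wg u p)) * (2 * pdx u p * H (0,1) (1,0)
        + 2 * pdy u p * H (0,1) (0,1)))) + (Wg u p)⁻¹ * H (0,1) (0,1) := by
    show fderiv ℝ (fun q => pdy u q / Wg u q) p ((0,1) : ℝ × ℝ) = _
    rw [hq2.fderiv]
    simp [ContinuousLinearMap.flip_apply, smul_eq_mul]
    ring
  have hW2 : (Wg u p) ^ 2 = 1 + (pdx u p)^2 + (pdy u p)^2 := by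
    rw [Wg_sq]; unfold gradSq; ring
  rw [divW, e1, e2, hsym]
  exact alg_divW _ _ _ _ _ _ hWpos hW2

set_option maxHeartbeats 1000000 in
/-- Height estimates for solutions of the Dirichlet problem for the translating
soliton equation. -/
theorem height_estimates (Ω : Set (ℝ × ℝ)) (hΩo : IsOpen Ω) (hΩc : IsConnected Ω)
    (hΩb : Bornology.IsBounded Ω) (φ : ℝ × ℝ → ℝ) (hφ : ContinuousOn φ (frontier Ω)) :
    ∃ C₁ : ℝ, ∀ u : ℝ × ℝ → ℝ,
      ContDiffOn ℝ 2 u Ω → ContinuousOn u (closure Ω) →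
      (∀ p ∈ Ω, divW u p = 1 / Wg u p) →
      (∀ p ∈ frontier Ω, u p = φ p) →
      ∀ p ∈ Ω, C₁ ≤ u p ∧ u p ≤ sSup (φ '' frontier Ω) := by
  -- basic geometry of Ω
  obtain ⟨r0, hr0⟩ := hΩb.subset_closedBall 0
  have hclball : closure Ω ⊆ Metric.closedBall 0 r0 :=
    closure_minimal hr0 Metric.isClosed_closedBall
  have hR : ∀ q ∈ closure Ω, q.1^2 + q.2^2 ≤ 2 * r0^2 := by
    intro q hq
    have h1 : ‖q‖ ≤ r0 := by simpa [Metric.mem_closedBall] using hclball hq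
    have h2 : |q.1| ≤ ‖q‖ := by
      simpa using norm_fst_le q
    have h3 : |q.2| ≤ ‖q‖ := by
      simpa using norm_snd_le q
    have h4 : q.1^2 ≤ r0^2 := by
      have := sq_le_sq' (by linarith [abs_nonneg q.1, neg_abs_le q.1]) (le_trans h2 h1)
      nlinarith [abs_nonneg q.1, le_abs_self q.1, neg_abs_le q.1, norm_nonneg q]
    have h5 : q.2^2 ≤ r0^2 := by
      nlinarith [abs_nonneg q.2, le_abs_self q.2, neg_abs_le q.2, norm_nonneg q]
    linarith
  have hΩne : Ω.Nonempty := hΩc.nonempty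
  have hKcomp : IsCompact (closure Ω) := hΩb.isCompact_closure
  have hKne : (closure Ω).Nonempty := hΩne.closure
  have hfrcl : IsClosed (frontier Ω) := isClosed_frontier
  have hfrcomp : IsCompact (frontier Ω) :=
    hKcomp.of_isClosed_subset hfrcl frontier_subset_closure
  have hfrne : (frontier Ω).Nonempty := by
    rcases eq_empty_or_nonempty (frontier Ω) with h | h
    · exfalso
      have hcl : IsClopen Ω := isClopen_iff_frontier_eq_empty.mpr h
      rcases isClopen_iff.mp hcl with h1 | h1
      · exact absurd h1 (Set.nonempty_iff_ne_empty.mp hΩne)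
      · have hmem : ((|r0| + 1, 0) : ℝ × ℝ) ∈ Ω := h1 ▸ Set.mem_univ _
        have := hr0 hmem
        have h2 : ‖((|r0| + 1, 0) : ℝ × ℝ)‖ ≤ r0 := by
          simpa [Metric.mem_closedBall] using this
        have h3 : |(|r0| + 1)| ≤ ‖((|r0| + 1, 0) : ℝ × ℝ)‖ := by
          simpa using norm_fst_le ((|r0| + 1, 0) : ℝ × ℝ)
        have h4 : |r0| + 1 ≤ |(|r0| + 1)| := le_abs_self _
        have := le_abs_self r0
        linarith
    · exact h
  have himg : IsCompact (φ '' frontier Ω) := hfrcomp.image_of_continuousOn hφ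
  have himgne : (φ '' frontier Ω).Nonempty := hfrne.image φ
  set m := sInf (φ '' frontier Ω) with hm
  have hmle : ∀ q ∈ frontier Ω, m ≤ φ q := fun q hq =>
    csInf_le himg.bddBelow (mem_image_of_mem φ hq)
  have hMle : ∀ q ∈ frontier Ω, φ q ≤ sSup (φ '' frontier Ω) := fun q hq =>
    le_csSup himg.bddAbove (mem_image_of_mem φ hq)
  -- the decomposition of the closure
  have hdecomp : ∀ q ∈ closure Ω, q ∈ Ω ∨ q ∈ frontier Ω := by
    intro q hq
    by_cases hqΩ : q ∈ Ω
    · exact Or.inl hqΩ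
    · right
      rw [frontier, hΩo.interior_eq]
      exact ⟨hq, hqΩ⟩
  refine ⟨m - 2 * r0^2, ?_⟩
  intro u hC2 hcont hPDE hbdry
  -- differentiability facts
  have hCA : ∀ q ∈ Ω, ContDiffAt ℝ 2 u q := fun q hq =>
    (hC2 q hq).contDiffAt (hΩo.mem_nhds hq)
  have hdiff : ∀ q ∈ Ω, DifferentiableAt ℝ u q := fun q hq =>
    (hCA q hq).differentiableAt (by norm_num)
  have hfd : ∀ q ∈ Ω, DifferentiableAt ℝ (fderiv ℝ u) q := fun q hq =>
    ((hCA q hq).fderiv_right (m := 1) (by norm_num)).differentiableAt (by norm_num)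
  have hbridge : ∀ q ∈ Ω, ∀ e : ℝ × ℝ,
      fderiv ℝ (fun r => fderiv ℝ u r e) q = (fderiv ℝ (fderiv ℝ u) q).flip e := by
    intro q hq e
    rw [fderiv_clm_apply (hfd q hq) (differentiableAt_const e)]
    simp
  -- Part 1 : upper bound
  have hupper : ∀ p ∈ Ω, u p ≤ sSup (φ '' frontier Ω) := by
    obtain ⟨q, hqK, hqmax⟩ := hKcomp.exists_isMaxOn hKne hcont
    rcases hdecomp q hqK with hqΩ | hqfr
    · exfalso
      have hlmax : IsLocalMax u q :=
        hqmax.isLocalMax (Filter.mem_of_superset (hΩo.mem_nhds hqΩ) subset_closure)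
      have hgrad : fderiv ℝ u q = 0 := hlmax.fderiv_eq_zero
      have hpx : pdx u q = 0 := by simp [pdx, hgrad]
      have hpy : pdy u q = 0 := by simp [pdy, hgrad]
      have hWq : Wg u q = 1 := by
        simp [Wg, gradSq, hpx, hpy]
      have hev : ∀ᶠ r in nhds q, DifferentiableAt ℝ u r := by
        filter_upwards [hΩo.mem_nhds hqΩ] with r hr using hdiff r hr
      have hxx : fderiv ℝ (fderiv ℝ u) q (1,0) (1,0) ≤ 0 := by
        have h := second_test_dir_max ((1,0) : ℝ × ℝ) hev
          ((hfd q hqΩ).clm_apply (differentiableAt_const _)) hlmax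
        rwa [hbridge q hqΩ, ContinuousLinearMap.flip_apply] at h
      have hyy : fderiv ℝ (fderiv ℝ u) q (0,1) (0,1) ≤ 0 := by
        have h := second_test_dir_max ((0,1) : ℝ × ℝ) hev
          ((hfd q hqΩ).clm_apply (differentiableAt_const _)) hlmax
        rwa [hbridge q hqΩ, ContinuousLinearMap.flip_apply] at h
      have hform := divW_formula hΩo hC2 hqΩ
      rw [hPDE q hqΩ, hWq, hpx, hpy] at hform
      simp at hform
      linarith
    · intro p hp
      calc u p ≤ u q := hqmax (subset_closure hp)
      _ = φ q := hbdry q hqfr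
      _ ≤ sSup (φ '' frontier Ω) := hMle q hqfr
  -- Part 2 : lower bound, compare with v r = r.1² + r.2²
  set v : ℝ × ℝ → ℝ := fun r => r.1 * r.1 + r.2 * r.2 with hv
  have hvL : ∀ r : ℝ × ℝ, ∃ L : ℝ × ℝ →L[ℝ] ℝ, HasFDerivAt v L r ∧
      ∀ w : ℝ × ℝ, L w = 2 * r.1 * w.1 + 2 * r.2 * w.2 := by
    intro r
    refine ⟨_, (hasFDerivAt_fst.mul hasFDerivAt_fst).add (hasFDerivAt_snd.mul hasFDerivAt_snd),
      fun w => ?_⟩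
    simp
    ring
  have hvdiff : ∀ r : ℝ × ℝ, DifferentiableAt ℝ v r := fun r =>
    ((hvL r).choose_spec.1).differentiableAt
  set w : ℝ × ℝ → ℝ := fun r => u r - v r with hwdef
  have hlower : ∀ p ∈ Ω, m - 2 * r0^2 ≤ u p := by
    have hwcont : ContinuousOn w (closure Ω) :=
      hcont.sub ((continuous_fst.mul continuous_fst).add
        (continuous_snd.mul continuous_snd)).continuousOn
    obtain ⟨q, hqK, hqmin⟩ := hKcomp.exists_isMinOn hKne hwcont
    rcases hdecomp q hqK with hqΩ | hqfr
    · exfalso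
      have hlmin : IsLocalMin w q :=
        hqmin.isLocalMin (Filter.mem_of_superset (hΩo.mem_nhds hqΩ) subset_closure)
      have hgrad0 : fderiv ℝ w q = 0 := hlmin.fderiv_eq_zero
      obtain ⟨Lq, hLq, hLqw⟩ := hvL q
      have hgradu : fderiv ℝ u q = Lq := by
        have hsub : fderiv ℝ w q = fderiv ℝ u q - fderiv ℝ v q :=
          fderiv_sub (hdiff q hqΩ) (hvdiff q)
        rw [hgrad0, hLq.fderiv] at hsub
        exact (sub_eq_zero.mp hsub.symm)
      have hpx : pdx u q = 2 * q.1 := by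
        rw [pdx, hgradu]
        simpa using hLqw (1,0)
      have hpy : pdy u q = 2 * q.2 := by
        rw [pdy, hgradu]
        simpa using hLqw (0,1)
      -- the key inequality from the second derivative test
      have hev : ∀ᶠ r in nhds q, DifferentiableAt ℝ w r := by
        filter_upwards [hΩo.mem_nhds hqΩ] with r hr using (hdiff r hr).sub (hvdiff r)
      have hkey : ∀ e : ℝ × ℝ,
          2 * e.1^2 + 2 * e.2^2 ≤ fderiv ℝ (fderiv ℝ u) q e e := by
        intro e
        set L2 : ℝ × ℝ →L[ℝ] ℝ := (2*e.1) • ContinuousLinearMap.fst ℝ ℝ ℝ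
          + (2*e.2) • ContinuousLinearMap.snd ℝ ℝ ℝ with hL2
        have hfun : (fun r : ℝ × ℝ => 2*r.1*e.1 + 2*r.2*e.2) = ⇑L2 := by
          funext r
          simp [hL2]
          ring
        have hd1 : DifferentiableAt ℝ (fun r => fderiv ℝ u r e) q :=
          (hfd q hqΩ).clm_apply (differentiableAt_const e)
        have hevq : (fun r => fderiv ℝ w r e)
            =ᶠ[nhds q] (fun r => fderiv ℝ u r e - (2*r.1*e.1 + 2*r.2*e.2)) := by
          filter_upwards [hΩo.mem_nhds hqΩ] with r hr
          obtain ⟨Lr, hLr, hLrw⟩ := hvL r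
          have hsub : fderiv ℝ w r = fderiv ℝ u r - fderiv ℝ v r :=
            fderiv_sub (hdiff r hr) (hvdiff r)
          rw [hsub, hLr.fderiv]
          simp [ContinuousLinearMap.sub_apply, hLrw e]
        have hd2 : DifferentiableAt ℝ (fun r : ℝ × ℝ => 2*r.1*e.1 + 2*r.2*e.2) q := by
          rw [hfun]; exact L2.differentiableAt
        have hw2 : DifferentiableAt ℝ (fun r => fderiv ℝ w r e) q := by
          rw [Filter.EventuallyEq.differentiableAt_iff hevq]
          exact hd1.sub hd2
        have h := second_test_dir e hev hw2 hlmin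
        have heq : fderiv ℝ (fun r => fderiv ℝ w r e) q e
            = fderiv ℝ (fderiv ℝ u) q e e - (2 * e.1^2 + 2 * e.2^2) := by
          rw [hevq.fderiv_eq, fderiv_fun_sub hd1 hd2]
          have hfd2 : fderiv ℝ (fun r : ℝ × ℝ => 2*r.1*e.1 + 2*r.2*e.2) q = L2 := by
            rw [hfun]; exact L2.fderiv
          rw [ContinuousLinearMap.sub_apply, hbridge q hqΩ e,
            ContinuousLinearMap.flip_apply, hfd2]
          simp [hL2]
          ring
        rw [heq] at h
        linarith
      -- assemble the contradiction
      have hsymq : fderiv ℝ (fderiv ℝ u) q (0,1) (1,0) = fderiv ℝ (fderiv ℝ u) q (1,0) (0,1) :=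
        ((hCA q hqΩ).isSymmSndFDerivAt (by norm_num)) _ _
      set a := fderiv ℝ (fderiv ℝ u) q (1,0) (1,0) with ha
      set b := fderiv ℝ (fderiv ℝ u) q (0,1) (0,1) with hb
      set s := fderiv ℝ (fderiv ℝ u) q (1,0) (0,1) with hs
      have hkx : (2:ℝ) ≤ a := by simpa using hkey (1,0)
      have hky : (2:ℝ) ≤ b := by simpa using hkey (0,1)
      have hHee : fderiv ℝ (fderiv ℝ u) q ((-(2*q.2), 2*q.1) : ℝ × ℝ) ((-(2*q.2), 2*q.1) : ℝ × ℝ)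
          = (2*q.2)^2 * a - 2 * (2*q.1) * (2*q.2) * s + (2*q.1)^2 * b := by
        have hdec : ((-(2*q.2), 2*q.1) : ℝ × ℝ)
            = (-(2*q.2)) • ((1,0) : ℝ × ℝ) + (2*q.1) • ((0,1) : ℝ × ℝ) := by
          simp [Prod.ext_iff]
        rw [hdec]
        simp only [map_add, map_smul, ContinuousLinearMap.add_apply,
          ContinuousLinearMap.coe_smul', Pi.smul_apply, smul_eq_mul]
        rw [hsymq]
        simp only [← ha, ← hb, ← hs]
        ring
      have hke : 2 * (2*q.2)^2 + 2 * (2*q.1)^2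
          ≤ (2*q.2)^2 * a - 2 * (2*q.1) * (2*q.2) * s + (2*q.1)^2 * b := by
        have h := hkey ((-(2*q.2), 2*q.1) : ℝ × ℝ)
        rw [hHee] at h
        norm_num at h
        linarith [h]
      have hform := divW_formula hΩo hC2 hqΩ
      rw [hPDE q hqΩ, hpx, hpy] at hform
      simp only [← ha, ← hb, ← hs] at hform
      have hWpos := Wg_pos u q
      have hW2 : (Wg u q)^2 = 1 + (2*q.1)^2 + (2*q.2)^2 := by
        rw [Wg_sq, gradSq, hpx, hpy]; ring
      have hN : (1 + (2*q.2)^2) * a + (1 + (2*q.1)^2) * b - 2 * (2*q.1) * (2*q.2) * s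
          = (Wg u q)^2 := by
        rw [div_eq_div_iff hWpos.ne' (pow_ne_zero 3 hWpos.ne')] at hform
        have hcancel : Wg u q * ((Wg u q)^2)
            = Wg u q * ((1 + (2*q.2)^2) * a + (1 + (2*q.1)^2) * b - 2 * (2*q.1) * (2*q.2) * s) := by
          linear_combination hform
        exact (mul_left_cancel₀ hWpos.ne' hcancel).symm
      rw [hW2] at hN
      nlinarith [hkx, hky, hke, hN, sq_nonneg (2*q.1), sq_nonneg (2*q.2)]
    · intro p hp
      have hq0 : m - 2 * r0^2 ≤ w q := by
        have h1 : w q = φ q - v q := by simp [hwdef, hbdry q hqfr]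
        have h2 : v q ≤ 2 * r0^2 := by
          have := hR q (frontier_subset_closure hqfr)
          simp only [hv]
          nlinarith [this]
        have h3 := hmle q hqfr
        rw [h1]
        linarith
      have h4 : w q ≤ w p := hqmin (subset_closure hp)
      have h5 : 0 ≤ v p := by
        simp only [hv]
        nlinarith [sq_nonneg p.1, sq_nonneg p.2]
      have : w p = u p - v p := rfl
      linarith [hq0, h4, h5, this ▸ h4]
  intro p hp
  exact ⟨hlower p hp, hupper p hp⟩
end

section
/- There exist R > 0 and a function u ∈ C²([0,R]) with u(0) = 0 and u'(0) = 0 satisfying (r u'(r)/√(1+u'(r)²))' = r/√(1+u'(r)²) for all r ∈ (0,R); moreover u''(0) = 1/2, i.e. u''(r) → 1/2 as r → 0⁺. -/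
open Real Set Filter
open MeasureTheory intervalIntegral BoundedContinuousFunction

noncomputable section BowlAux

/-- clamp to `[0, 1/2]` -/
def bsProj (r : ℝ) : ℝ := max 0 (min r (1/2))

lemma bsProj_continuous : Continuous bsProj :=
  continuous_const.max (continuous_id.min continuous_const)

lemma bsProj_nonneg (r : ℝ) : 0 ≤ bsProj r := le_max_left _ _

lemma bsProj_le (r : ℝ) : bsProj r ≤ 1/2 := by
  apply max_le (by norm_num) (min_le_right _ _)

lemma bsProj_eq {r : ℝ} (h0 : 0 ≤ r) (h1 : r ≤ 1/2) : bsProj r = r := by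
  unfold bsProj; rw [min_eq_left h1, max_eq_right h0]

lemma bs_sqrt_le {x : ℝ} (hx : |x| ≤ 1/2) : Real.sqrt (1 - x^2) ≤ 1 := by
  nlinarith [Real.sqrt_le_sqrt (show (1:ℝ) - x^2 ≤ 1 by nlinarith), Real.sqrt_one]

lemma bs_one_sub_sq_pos {x : ℝ} (hx : |x| ≤ 1/2) : (3:ℝ)/4 ≤ 1 - x^2 := by
  have := abs_le.1 hx; nlinarith [this.1, this.2]

lemma bs_sqrt_ge {x : ℝ} (hx : |x| ≤ 1/2) : (1:ℝ)/2 ≤ Real.sqrt (1 - x^2) := by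
  have h := bs_one_sub_sq_pos hx
  have : Real.sqrt (1/4) ≤ Real.sqrt (1 - x^2) := Real.sqrt_le_sqrt (by linarith)
  rwa [show (1:ℝ)/4 = (1/2)^2 by norm_num, Real.sqrt_sq (by norm_num)] at this

lemma bs_sqrt_lip {x y : ℝ} (hx : |x| ≤ 1/2) (hy : |y| ≤ 1/2) :
    |Real.sqrt (1 - x^2) - Real.sqrt (1 - y^2)| ≤ |x - y| := by
  have hx2 : (0:ℝ) ≤ 1 - x^2 := by linarith [bs_one_sub_sq_pos hx]
  have hy2 : (0:ℝ) ≤ 1 - y^2 := by linarith [bs_one_sub_sq_pos hy]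
  set a := Real.sqrt (1 - x^2) with ha
  set b := Real.sqrt (1 - y^2) with hb
  have ha2 : a^2 = 1 - x^2 := Real.sq_sqrt hx2
  have hb2 : b^2 = 1 - y^2 := Real.sq_sqrt hy2
  have hage : (1:ℝ)/2 ≤ a := bs_sqrt_ge hx
  have hbge : (1:ℝ)/2 ≤ b := bs_sqrt_ge hy
  have hxy : |x + y| ≤ 1 := by
    have := abs_le.1 hx; have := abs_le.1 hy
    rw [abs_le]; constructor <;> linarith [(abs_le.1 hx).1, (abs_le.1 hx).2,
      (abs_le.1 hy).1, (abs_le.1 hy).2]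
  have key : |a - b| * (a + b) = |x - y| * |x + y| := by
    rw [← abs_of_nonneg (show (0:ℝ) ≤ a + b by linarith), ← abs_mul, ← abs_mul,
      show (a - b) * (a + b) = -((x - y) * (x + y)) by nlinarith [ha2, hb2], abs_neg]
  have h1 : |a - b| * 1 ≤ |a - b| * (a + b) := by
    apply mul_le_mul_of_nonneg_left (by linarith) (abs_nonneg _)
  calc |a - b| = |a - b| * 1 := (mul_one _).symm
    _ ≤ |a - b| * (a + b) := h1
    _ = |x - y| * |x + y| := key
    _ ≤ |x - y| * 1 := mul_le_mul_of_nonneg_left hxy (abs_nonneg _)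
    _ = |x - y| := mul_one _

/-- the averaged integral operator -/
def bsG (f : ℝ → ℝ) (r : ℝ) : ℝ := ∫ t in (0:ℝ)..1, t * Real.sqrt (1 - (f (bsProj r * t))^2)

lemma bsG_continuous {f : ℝ → ℝ} (hf : Continuous f) : Continuous (bsG f) := by
  have : Continuous (Function.uncurry fun (r t : ℝ) => t * Real.sqrt (1 - (f (bsProj r * t))^2)) := by
    apply Continuous.mul continuous_snd
    apply Real.continuous_sqrt.comp
    apply Continuous.sub continuous_const
    exact (hf.comp ((bsProj_continuous.comp continuous_fst).mul continuous_snd)).pow 2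
  exact intervalIntegral.continuous_parametric_intervalIntegral_of_continuous' this 0 1

lemma bsG_abs_le {f : ℝ → ℝ} (hf : Continuous f) (hb : ∀ x, |f x| ≤ 1/2) (r : ℝ) :
    |bsG f r| ≤ 1/2 := by
  have hc : Continuous fun t : ℝ => t * Real.sqrt (1 - (f (bsProj r * t))^2) := by
    fun_prop
  have h1 : |bsG f r| ≤ ∫ t in (0:ℝ)..1, |t * Real.sqrt (1 - (f (bsProj r * t))^2)| := by
    exact abs_integral_le_integral_abs (by norm_num)
  have h2 : (∫ t in (0:ℝ)..1, |t * Real.sqrt (1 - (f (bsProj r * t))^2)|)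
      ≤ ∫ t in (0:ℝ)..1, t := by
    apply integral_mono_on (by norm_num)
    · exact hc.abs.intervalIntegrable _ _
    · exact (continuous_id).intervalIntegrable _ _
    · intro t ht
      rw [abs_mul, abs_of_nonneg ht.1]
      calc t * |Real.sqrt (1 - (f (bsProj r * t))^2)|
          ≤ t * 1 := by
            apply mul_le_mul_of_nonneg_left _ ht.1
            rw [abs_of_nonneg (Real.sqrt_nonneg _)]
            exact bs_sqrt_le (hb _)
        _ = t := mul_one _
  have h3 : (∫ t in (0:ℝ)..1, t) = 1/2 := by
    simp [integral_id]
  calc |bsG f r| ≤ ∫ t in (0:ℝ)..1, t := le_trans h1 h2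
    _ = 1/2 := h3


abbrev BsBCF := BoundedContinuousFunction ℝ ℝ

def bsS : Set BsBCF := {f | ‖f‖ ≤ 1/2}

lemma bsS_closed : IsClosed bsS := by
  have : bsS = Metric.closedBall 0 (1/2) := by
    ext f; simp [bsS, Metric.mem_closedBall, dist_zero_right]
  rw [this]; exact Metric.isClosed_closedBall

instance : CompleteSpace bsS := bsS_closed.completeSpace_coe

instance : Nonempty bsS := ⟨⟨0, by simp [bsS]⟩⟩

lemma bs_mem_bound {f : BsBCF} (hf : f ∈ bsS) (x : ℝ) : |f x| ≤ 1/2 :=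
  le_trans (f.norm_coe_le_norm x) hf

def bsT : bsS → bsS := fun f =>
  ⟨BoundedContinuousFunction.ofNormedAddCommGroup
    (fun r => bsProj r * bsG f.1 r)
    (bsProj_continuous.mul (bsG_continuous f.1.continuous))
    (1/2)
    (fun r => by
      rw [Real.norm_eq_abs, abs_mul]
      calc |bsProj r| * |bsG f.1 r| ≤ (1/2) * (1/2) := by
            apply mul_le_mul _ (bsG_abs_le f.1.continuous (bs_mem_bound f.2) r)
              (abs_nonneg _) (by norm_num)
            rw [abs_of_nonneg (bsProj_nonneg r)]; exact bsProj_le r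
        _ ≤ 1/2 := by norm_num),
   BoundedContinuousFunction.norm_ofNormedAddCommGroup_le _ (by norm_num) _⟩

lemma bsT_apply (f : bsS) (r : ℝ) : (bsT f).1 r = bsProj r * bsG f.1 r := rfl

lemma bsG_dist {f g : BsBCF} (hf : f ∈ bsS) (hg : g ∈ bsS) (r : ℝ) :
    |bsG f r - bsG g r| ≤ dist f g / 2 := by
  have hcf : Continuous fun t : ℝ => t * Real.sqrt (1 - (f (bsProj r * t))^2) := by fun_prop
  have hcg : Continuous fun t : ℝ => t * Real.sqrt (1 - (g (bsProj r * t))^2) := by fun_prop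
  have hsub : bsG f r - bsG g r = ∫ t in (0:ℝ)..1,
      (t * Real.sqrt (1 - (f (bsProj r * t))^2) - t * Real.sqrt (1 - (g (bsProj r * t))^2)) := by
    rw [intervalIntegral.integral_sub (hcf.intervalIntegrable _ _) (hcg.intervalIntegrable _ _)]
    rfl
  rw [hsub]
  calc |∫ t in (0:ℝ)..1, (t * Real.sqrt (1 - (f (bsProj r * t))^2)
          - t * Real.sqrt (1 - (g (bsProj r * t))^2))|
      ≤ ∫ t in (0:ℝ)..1, |t * Real.sqrt (1 - (f (bsProj r * t))^2)
          - t * Real.sqrt (1 - (g (bsProj r * t))^2)| :=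
        abs_integral_le_integral_abs (by norm_num)
    _ ≤ ∫ t in (0:ℝ)..1, t * dist f g := by
        apply integral_mono_on (by norm_num)
        · exact (hcf.sub hcg).abs.intervalIntegrable _ _
        · exact (continuous_id.mul continuous_const).intervalIntegrable _ _
        · intro t ht
          rw [← mul_sub, abs_mul, abs_of_nonneg ht.1]
          apply mul_le_mul_of_nonneg_left _ ht.1
          calc |Real.sqrt (1 - (f (bsProj r * t))^2) - Real.sqrt (1 - (g (bsProj r * t))^2)|
              ≤ |f (bsProj r * t) - g (bsProj r * t)| :=
                bs_sqrt_lip (bs_mem_bound hf _) (bs_mem_bound hg _)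
            _ ≤ dist f g := by
                rw [← Real.dist_eq]; exact BoundedContinuousFunction.dist_coe_le_dist _
    _ = dist f g / 2 := by
        rw [intervalIntegral.integral_mul_const, integral_id]; ring
  done

lemma bsT_contracting : ContractingWith (1/2 : NNReal) bsT := by
  constructor
  · rw [← NNReal.coe_lt_coe]; norm_num
  · apply LipschitzWith.of_dist_le_mul
    intro f g
    rw [Subtype.dist_eq]
    have h0 : (0:ℝ) ≤ (1/2 : NNReal) * dist f g := by positivity
    rw [BoundedContinuousFunction.dist_le h0]
    intro r
    rw [Real.dist_eq]
    calc |(bsT f).1 r - (bsT g).1 r| = |bsProj r| * |bsG f.1 r - bsG g.1 r| := by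
          rw [bsT_apply, bsT_apply, ← mul_sub, abs_mul]
      _ ≤ (1/2) * (dist f.1 g.1 / 2) := by
          apply mul_le_mul _ (bsG_dist f.2 g.2 r) (abs_nonneg _) (by norm_num)
          rw [abs_of_nonneg (bsProj_nonneg r)]; exact bsProj_le r
      _ ≤ (1/2 : NNReal) * dist f g := by
          rw [Subtype.dist_eq]
          push_cast
          nlinarith [dist_nonneg (x := f.1) (y := g.1)]

/-- the fixed point -/
def bsPfix : bsS := ContractingWith.fixedPoint bsT bsT_contracting

def bsp : ℝ → ℝ := fun r => (bsPfix.1 : ℝ → ℝ) r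

@[fun_prop] lemma bsp_cont : Continuous bsp := bsPfix.1.continuous

lemma bsp_bnd (r : ℝ) : |bsp r| ≤ 1/2 := bs_mem_bound bsPfix.2 r

lemma bsp_fix (r : ℝ) : bsp r = bsProj r * bsG bsp r := by
  have h := ContractingWith.fixedPoint_isFixedPt bsT_contracting
  have h3 : (bsT bsPfix).1 r = bsPfix.1 r := congrArg (fun f : bsS => f.1 r) h
  rw [bsT_apply] at h3
  exact h3.symm


/-- `q r = (1/r)∫₀ʳ s √(1-p²)` in averaged form -/
def bsq : ℝ → ℝ := fun r => bsG bsp r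

@[fun_prop] lemma bsq_cont : Continuous bsq := bsG_continuous bsp_cont

lemma bsp_zero : bsp 0 = 0 := by
  rw [bsp_fix 0, bsProj_eq le_rfl (by norm_num), zero_mul]

lemma bsq_zero : bsq 0 = 1/2 := by
  unfold bsq bsG
  rw [bsProj_eq le_rfl (by norm_num)]
  have : ∀ t : ℝ, t * Real.sqrt (1 - (bsp (0 * t))^2) = t := by
    intro t; rw [zero_mul, bsp_zero]; norm_num
  simp only [this]
  norm_num [integral_id]

lemma bsp_eq {r : ℝ} (h0 : 0 ≤ r) (h1 : r ≤ 1/2) : bsp r = r * bsq r := by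
  rw [bsp_fix r, bsProj_eq h0 h1]; rfl

lemma bsq_int {r : ℝ} (h0 : 0 ≤ r) (h1 : r ≤ 1/2) :
    bsq r = ∫ t in (0:ℝ)..1, t * Real.sqrt (1 - (bsp (r * t))^2) := by
  unfold bsq bsG
  rw [bsProj_eq h0 h1]

/-- the primitive -/
def bsF : ℝ → ℝ := fun r => ∫ s in (0:ℝ)..r, s * Real.sqrt (1 - (bsp s)^2)

lemma bsh_cont : Continuous (fun s : ℝ => s * Real.sqrt (1 - (bsp s)^2)) := by fun_prop

lemma bsF_hasDeriv (r : ℝ) :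
    HasDerivAt bsF (r * Real.sqrt (1 - (bsp r)^2)) r := by
  exact integral_hasDerivAt_right (bsh_cont.intervalIntegrable _ _)
    (bsh_cont.stronglyMeasurableAtFilter _ _) bsh_cont.continuousAt

lemma bsF_eq {r : ℝ} (h0 : 0 < r) (h1 : r ≤ 1/2) : bsF r = r^2 * bsq r := by
  have hc : r ≠ 0 := ne_of_gt h0
  have h := integral_comp_mul_left (a := (0:ℝ)) (b := 1)
    (f := fun s => s * Real.sqrt (1 - (bsp s)^2)) (c := r) hc
  rw [mul_zero, mul_one] at h
  -- h : ∫ t in 0..1, (r*t) * √(1 - bsp (r*t)^2) = r⁻¹ • bsF r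
  have h2 : (∫ t in (0:ℝ)..1, (r * t) * Real.sqrt (1 - (bsp (r * t))^2))
      = r * bsq r := by
    rw [bsq_int (le_of_lt h0) h1, ← intervalIntegral.integral_const_mul]
    congr 1; ext t; ring
  rw [h2] at h
  have h3 : r * bsq r = r⁻¹ * bsF r := by rw [h, smul_eq_mul]; rfl
  have h4 : bsF r = r * (r * bsq r) := by rw [h3]; field_simp
  rw [h4]; ring

/-- candidate derivative of `p` -/
def bspd : ℝ → ℝ := fun r => Real.sqrt (1 - (bsp r)^2) - bsq r

@[fun_prop] lemma bspd_cont : Continuous bspd := by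
  unfold bspd; fun_prop

lemma bspd_zero : bspd 0 = 1/2 := by
  unfold bspd; rw [bsp_zero, bsq_zero]; norm_num

lemma bsp_hasDeriv {r : ℝ} (hr : r ∈ Ioo (0:ℝ) (1/2)) :
    HasDerivAt bsp (bspd r) r := by
  have hne : r ≠ 0 := ne_of_gt hr.1
  have heq : ∀ x ∈ Ioo (0:ℝ) (1/2), bsp x = bsF x / x := by
    intro x hx
    rw [bsF_eq hx.1 (le_of_lt hx.2), bsp_eq (le_of_lt hx.1) (le_of_lt hx.2),
      pow_two, mul_assoc, mul_comm x (bsq x), ← mul_assoc,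
      mul_div_assoc, div_self (ne_of_gt hx.1), mul_one, mul_comm]
  have hmem : Ioo (0:ℝ) (1/2) ∈ nhds r := isOpen_Ioo.mem_nhds hr
  have hd : HasDerivAt (fun x => bsF x / x)
      (((r * Real.sqrt (1 - (bsp r)^2)) * r - bsF r * 1) / r^2) r :=
    (bsF_hasDeriv r).div (hasDerivAt_id r) hne
  have hval : ((r * Real.sqrt (1 - (bsp r)^2)) * r - bsF r * 1) / r^2 = bspd r := by
    rw [bsF_eq hr.1 (le_of_lt hr.2)]
    unfold bspd
    field_simp
  rw [hval] at hd
  apply hd.congr_of_eventuallyEq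
  filter_upwards [hmem] with x hx using heq x hx

lemma bsp_hasDerivWithin_zero :
    HasDerivWithinAt bsp (1/2) (Icc (0:ℝ) (1/2)) 0 := by
  rw [hasDerivWithinAt_iff_tendsto_slope]
  have hss : Icc (0:ℝ) (1/2) \ {0} = Ioc (0:ℝ) (1/2) := by
    ext x; simp only [mem_diff, mem_Icc, mem_singleton_iff, mem_Ioc]
    constructor
    · rintro ⟨⟨h1, h2⟩, h3⟩; exact ⟨lt_of_le_of_ne h1 (Ne.symm h3), h2⟩
    · rintro ⟨h1, h2⟩; exact ⟨⟨le_of_lt h1, h2⟩, ne_of_gt h1⟩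
  rw [hss]
  have h1 : Tendsto bsq (nhdsWithin 0 (Ioc (0:ℝ) (1/2))) (nhds (1/2)) := by
    rw [← bsq_zero]
    exact (bsq_cont.tendsto 0).mono_left nhdsWithin_le_nhds
  apply h1.congr'
  filter_upwards [self_mem_nhdsWithin] with x hx
  rw [slope_def_field, bsp_zero, bsp_eq (le_of_lt hx.1) hx.2, sub_zero, sub_zero,
    mul_comm, mul_div_assoc, div_self (ne_of_gt hx.1), mul_one]

/-- the derivative `v = u'` -/
def bsv : ℝ → ℝ := fun r => bsp r / Real.sqrt (1 - (bsp r)^2)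

lemma bs_denom_pos (r : ℝ) : (0:ℝ) < 1 - (bsp r)^2 :=
  lt_of_lt_of_le (by norm_num) (bs_one_sub_sq_pos (bsp_bnd r))

lemma bs_sqrt_pos (r : ℝ) : (0:ℝ) < Real.sqrt (1 - (bsp r)^2) :=
  lt_of_lt_of_le (by norm_num) (bs_sqrt_ge (bsp_bnd r))

lemma bsv_cont : Continuous bsv := by
  apply Continuous.div (by fun_prop) (by fun_prop)
  intro r; exact ne_of_gt (bs_sqrt_pos r)

lemma bsv_zero : bsv 0 = 0 := by unfold bsv; rw [bsp_zero]; simp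

/-- derivative of `y ↦ y/√(1-y²)` -/
lemma bsphi_hasDeriv {y : ℝ} (hy : |y| ≤ 1/2) :
    HasDerivAt (fun x : ℝ => x / Real.sqrt (1 - x^2))
      (1 / ((1 - y^2) * Real.sqrt (1 - y^2))) y := by
  have h1 : (0:ℝ) < 1 - y^2 := lt_of_lt_of_le (by norm_num) (bs_one_sub_sq_pos hy)
  have h2 : (0:ℝ) < Real.sqrt (1 - y^2) := lt_of_lt_of_le (by norm_num) (bs_sqrt_ge hy)
  have hbase : HasDerivAt (fun x : ℝ => 1 - x^2) (-(2*y)) y := by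
    simpa using ((hasDerivAt_pow 2 y).const_sub 1)
  have hden : HasDerivAt (fun x : ℝ => Real.sqrt (1 - x^2))
      (-(2*y) / (2 * Real.sqrt (1 - y^2))) y := hbase.sqrt (ne_of_gt h1)
  have hd := (hasDerivAt_id y).div hden (ne_of_gt h2)
  convert hd using 1
  · rfl
  · rfl
  · rfl
  have hsq : (Real.sqrt (1 - y^2))^2 = 1 - y^2 := Real.sq_sqrt (le_of_lt h1)
  rw [id_eq, hsq]
  rw [div_eq_div_iff (by positivity) (by positivity)]
  field_simp
  linear_combination (-1) * hsq

/-- candidate second derivative -/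
def bsvd : ℝ → ℝ := fun r => bspd r / ((1 - (bsp r)^2) * Real.sqrt (1 - (bsp r)^2))

lemma bsvd_cont : Continuous bsvd := by
  apply Continuous.div (by fun_prop) (by fun_prop)
  intro r
  exact ne_of_gt (mul_pos (bs_denom_pos r) (bs_sqrt_pos r))

lemma bsvd_zero : bsvd 0 = 1/2 := by
  unfold bsvd; rw [bspd_zero, bsp_zero]; norm_num

lemma bsv_hasDeriv {r : ℝ} (hr : r ∈ Ioo (0:ℝ) (1/2)) :
    HasDerivAt bsv (bsvd r) r := by
  have h := (bsphi_hasDeriv (bsp_bnd r)).comp r (bsp_hasDeriv hr)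
  convert h using 1
  · rfl
  · rfl
  · rfl
  unfold bsvd; field_simp

lemma bsv_hasDerivWithin_zero :
    HasDerivWithinAt bsv (bsvd 0) (Icc (0:ℝ) (1/2)) 0 := by
  have h2 : HasDerivAt (fun x : ℝ => x / Real.sqrt (1 - x^2))
      (1 / ((1 - (bsp 0)^2) * Real.sqrt (1 - (bsp 0)^2))) (bsp 0) :=
    bsphi_hasDeriv (bsp_bnd 0)
  have h := h2.comp_hasDerivWithinAt 0 bsp_hasDerivWithin_zero
  convert h using 1
  · rfl
  · rfl
  · rfl
  rw [bsvd_zero, bsp_zero]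
  norm_num

/-- the solution -/
def bsu : ℝ → ℝ := fun r => ∫ s in (0:ℝ)..r, bsv s

lemma bsu_hasDeriv (r : ℝ) : HasDerivAt bsu (bsv r) r :=
  integral_hasDerivAt_right (bsv_cont.intervalIntegrable _ _)
    (bsv_cont.stronglyMeasurableAtFilter _ _) bsv_cont.continuousAt

lemma bsu_deriv : deriv bsu = bsv := funext fun r => (bsu_hasDeriv r).deriv

lemma bs_sqrt_key (s : ℝ) :
    Real.sqrt (1 + (bsv s)^2) = 1 / Real.sqrt (1 - (bsp s)^2) := by
  have h1 := bs_denom_pos s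
  have h2 := bs_sqrt_pos s
  have hsq : (Real.sqrt (1 - (bsp s)^2))^2 = 1 - (bsp s)^2 := Real.sq_sqrt (le_of_lt h1)
  have hv2 : (bsv s)^2 = (bsp s)^2 / (1 - (bsp s)^2) := by
    unfold bsv; rw [div_pow, hsq]
  have key : 1 + (bsv s)^2 = (1 / Real.sqrt (1 - (bsp s)^2))^2 := by
    rw [hv2, div_pow, one_pow, hsq]
    field_simp
    ring
  rw [key, Real.sqrt_sq (by positivity)]

lemma bs_p_key (s : ℝ) : bsv s / Real.sqrt (1 + (bsv s)^2) = bsp s := by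
  rw [bs_sqrt_key s, div_div_eq_mul_div, div_one]
  unfold bsv
  exact div_mul_cancel₀ _ (ne_of_gt (bs_sqrt_pos s))

lemma bsv_hasDerivWithin {x : ℝ} (hx : x ∈ Icc (0:ℝ) (1/4)) :
    HasDerivWithinAt bsv (bsvd x) (Icc (0:ℝ) (1/4)) x := by
  rcases eq_or_lt_of_le hx.1 with h | h
  · rw [← h]
    exact bsv_hasDerivWithin_zero.mono (Icc_subset_Icc_right (by norm_num))
  · exact (bsv_hasDeriv ⟨h, by linarith [hx.2]⟩).hasDerivWithinAt

end BowlAux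


/-- Existence of the bowl soliton: a `C²` solution of the radial translating soliton
equation `(r u'/√(1+u'²))' = r/√(1+u'²)` with `u(0) = u'(0) = 0`, and `u''(r) → 1/2`
as `r → 0⁺`. -/
theorem bowl_soliton_exists : ∃ R > (0 : ℝ), ∃ u : ℝ → ℝ,
    ContDiffOn ℝ 2 u (Set.Icc 0 R) ∧ u 0 = 0 ∧
    derivWithin u (Set.Icc 0 R) 0 = 0 ∧
    (∀ r ∈ Set.Ioo (0 : ℝ) R,
      deriv (fun s => s * deriv u s / Real.sqrt (1 + (deriv u s) ^ 2)) r
        = r / Real.sqrt (1 + (deriv u r) ^ 2)) ∧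
    Filter.Tendsto (fun r => deriv (deriv u) r) (nhdsWithin 0 (Set.Ioi 0))
      (nhds (1 / 2)) := by
  have uid : UniqueDiffOn ℝ (Icc (0:ℝ) (1/4)) := uniqueDiffOn_Icc (by norm_num)
  have hdiffu : DifferentiableOn ℝ bsu (Icc (0:ℝ) (1/4)) :=
    fun x _ => (bsu_hasDeriv x).differentiableAt.differentiableWithinAt
  have hdwu : ∀ x ∈ Icc (0:ℝ) (1/4), derivWithin bsu (Icc (0:ℝ) (1/4)) x = bsv x :=
    fun x hx => (bsu_hasDeriv x).hasDerivWithinAt.derivWithin (uid x hx)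
  have hdiffv : DifferentiableOn ℝ bsv (Icc (0:ℝ) (1/4)) :=
    fun x hx => (bsv_hasDerivWithin hx).differentiableWithinAt
  have hdwv : ∀ x ∈ Icc (0:ℝ) (1/4), derivWithin bsv (Icc (0:ℝ) (1/4)) x = bsvd x :=
    fun x hx => (bsv_hasDerivWithin hx).derivWithin (uid x hx)
  refine ⟨1/4, by norm_num, bsu, ?_, ?_, ?_, ?_, ?_⟩
  · -- C²
    rw [show (2 : WithTop ℕ∞) = 1 + 1 from by norm_num]
    rw [contDiffOn_succ_iff_derivWithin uid]
    refine ⟨hdiffu, by simp, ?_⟩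
    have hv1 : ContDiffOn ℝ 1 bsv (Icc (0:ℝ) (1/4)) := by
      rw [show (1 : WithTop ℕ∞) = 0 + 1 from by norm_num]
      rw [contDiffOn_succ_iff_derivWithin uid]
      refine ⟨hdiffv, by simp, ?_⟩
      rw [contDiffOn_zero]
      exact ContinuousOn.congr (bsvd_cont.continuousOn) hdwv
    exact hv1.congr hdwu
  · -- u 0 = 0
    simp [bsu]
  · -- u' 0 = 0
    rw [hdwu 0 (by norm_num [mem_Icc]), bsv_zero]
  · -- the ODE
    intro r hr
    have hr' : r ∈ Ioo (0:ℝ) (1/2) := ⟨hr.1, by linarith [hr.2]⟩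
    have hfun : (fun s => s * deriv bsu s / Real.sqrt (1 + (deriv bsu s)^2))
        = fun s => s * bsp s := by
      funext s
      rw [bsu_deriv, mul_div_assoc, bs_p_key]
    rw [hfun, bsu_deriv]
    have hmul : HasDerivAt (fun s => s * bsp s) (1 * bsp r + r * bspd r) r :=
      (hasDerivAt_id r).mul (bsp_hasDeriv hr')
    rw [hmul.deriv, bs_sqrt_key r, div_div_eq_mul_div, div_one]
    rw [show bspd r = Real.sqrt (1 - (bsp r)^2) - bsq r from rfl,
      bsp_eq (le_of_lt hr'.1) (le_of_lt hr'.2)]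
    ring
  · -- u'' → 1/2
    have hlim : Tendsto bsvd (nhdsWithin 0 (Ioi (0:ℝ))) (nhds (1/2)) := by
      rw [← bsvd_zero]
      exact (bsvd_cont.tendsto 0).mono_left nhdsWithin_le_nhds
    apply hlim.congr'
    filter_upwards [Ioo_mem_nhdsGT_of_mem
      (show (0:ℝ) ∈ Ico (0:ℝ) (1/2) from ⟨le_rfl, by norm_num⟩)] with x hx
    rw [bsu_deriv, (bsv_hasDeriv hx).deriv]
end

section
/- Let Ω ⊆ ℝ² be a bounded domain, let 0 ≤ t₁ < t₂ ≤ 1, and for i = 1, 2 let u_{t_i} ∈ C²(Ω) ∩ C⁰(closure Ω) satisfy (1+|Du|²)Δu − Σ_{i,j} u_i u_j u_{i;j} − t_i(1+|Du|²) = 0 in Ω. If u_{t₁} = u_{t₂} on ∂Ω, then u_{t₂} < u_{t₁} in Ω. -/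
open Real Set Filter

/-- The operator `Q_t[u] = (1+|Du|²)Δu − Σ_{i,j} u_i u_j u_{i;j} − t(1+|Du|²)`. -/
noncomputable def Qtop (t : ℝ) (u : ℝ × ℝ → ℝ) (p : ℝ × ℝ) : ℝ :=
  (1 + gradSq u p) * (pdx (pdx u) p + pdy (pdy u) p)
    - ((pdx u p) ^ 2 * pdx (pdx u) p + pdx u p * pdy u p * pdy (pdx u) p
        + pdy u p * pdx u p * pdx (pdy u) p + (pdy u p) ^ 2 * pdy (pdy u) p)
    - t * (1 + gradSq u p)

/-- If `g` has a local minimum at `0`, has derivative `h` near `0` with `h 0 = 0`, and `h`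
has derivative `D` at `0`, then `0 ≤ D` (second derivative test, necessary direction). -/
lemma aux_second_deriv_nonneg {g h : ℝ → ℝ} {D : ℝ}
    (hg : ∀ᶠ s in nhds (0:ℝ), HasDerivAt g (h s) s)
    (hmin : IsLocalMin g 0) (hh : HasDerivAt h D 0) (h0 : h 0 = 0) : 0 ≤ D := by
  by_contra hD
  push_neg at hD
  have hslope := hasDerivAt_iff_tendsto_slope.1 hh
  have hneg : ∀ᶠ s in nhdsWithin (0:ℝ) {(0:ℝ)}ᶜ, slope h 0 s < 0 :=
    hslope.eventually_lt_const hD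
  have hbig : ∀ᶠ s in nhds (0:ℝ), HasDerivAt g (h s) s ∧ g 0 ≤ g s := hg.and hmin
  rw [eventually_nhdsWithin_iff] at hneg
  have hall : ∀ᶠ s in nhds (0:ℝ),
      (s ∈ ({(0:ℝ)}ᶜ : Set ℝ) → slope h 0 s < 0) ∧ (HasDerivAt g (h s) s ∧ g 0 ≤ g s) :=
    hneg.and hbig
  rw [Metric.eventually_nhds_iff] at hall
  obtain ⟨ε, hε, hP⟩ := hall
  set δ := ε / 2 with hδdef
  have hδ : 0 < δ := by positivity
  have hmem : ∀ s ∈ Icc (0:ℝ) δ, dist s 0 < ε := by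
    intro s hs
    rw [Real.dist_eq, sub_zero, abs_of_nonneg hs.1]
    have := hs.2
    simp only [hδdef] at this ⊢
    linarith
  have hanti : StrictAntiOn g (Icc (0:ℝ) δ) := by
    apply strictAntiOn_of_deriv_neg (convex_Icc _ _)
    · intro s hs
      exact ((hP (hmem s hs)).2.1).continuousAt.continuousWithinAt
    · intro s hs
      rw [interior_Icc] at hs
      have hsε : dist s 0 < ε := hmem s ⟨hs.1.le, hs.2.le⟩
      have hs0 : s ∈ ({(0:ℝ)}ᶜ : Set ℝ) := by simp [ne_of_gt hs.1]
      have hsl : slope h 0 s < 0 := (hP hsε).1 hs0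
      rw [slope_def_field, h0, sub_zero, sub_zero] at hsl
      have hhs : h s < 0 := by
        rcases div_neg_iff.mp hsl with ⟨_, h2⟩ | ⟨h1, _⟩
        · linarith [hs.1]
        · exact h1
      rw [((hP hsε).2.1).deriv]
      exact hhs
  have h1 : g δ < g 0 := hanti (left_mem_Icc.mpr hδ.le) (right_mem_Icc.mpr hδ.le) hδ
  have h2 : g 0 ≤ g δ := (hP (hmem δ (right_mem_Icc.mpr hδ.le))).2.2
  linarith

/-- For a `C²` function on an open set, the directional derivative function is
differentiable. -/
lemma aux_diff_pd {f : ℝ × ℝ → ℝ} {Ω : Set (ℝ × ℝ)} (hΩ : IsOpen Ω) {p : ℝ × ℝ}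
    (hp : p ∈ Ω) (hf : ContDiffOn ℝ 2 f Ω) (v : ℝ × ℝ) :
    DifferentiableAt ℝ (fun q => fderiv ℝ f q v) p := by
  have h2 : ContDiffAt ℝ 2 f p := hf.contDiffAt (hΩ.mem_nhds hp)
  have h1 : ContDiffAt ℝ 1 (fderiv ℝ f) p := h2.fderiv_right (by norm_num)
  exact (h1.clm_apply contDiffAt_const).differentiableAt one_ne_zero

/-- At a local minimum of a `C²` function, the second derivative quadratic form is
positive semidefinite. -/
lemma aux_quad_nonneg {f : ℝ × ℝ → ℝ} {Ω : Set (ℝ × ℝ)} (hΩ : IsOpen Ω) {p : ℝ × ℝ}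
    (hp : p ∈ Ω) (hf : ContDiffOn ℝ 2 f Ω) (hmin : IsLocalMin f p) (v : ℝ × ℝ) :
    0 ≤ fderiv ℝ (fun q => fderiv ℝ f q v) p v := by
  have hdiff : ∀ q ∈ Ω, DifferentiableAt ℝ f q := fun q hq =>
    (hf.contDiffAt (hΩ.mem_nhds hq)).differentiableAt two_ne_zero
  set c : ℝ → ℝ × ℝ := fun s => p + s • v with hc
  have hcd : ∀ s : ℝ, HasDerivAt c v s := fun s =>
    ((hasDerivAt_id s).smul_const v).const_add p |>.congr_deriv (one_smul ℝ v)
  have hc0 : c 0 = p := by simp [hc]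
  have hccont : Continuous c := by fun_prop
  have htend : Tendsto c (nhds 0) (nhds p) := by
    rw [← hc0]; exact hccont.continuousAt
  have hmemΩ : ∀ᶠ s in nhds (0:ℝ), c s ∈ Ω :=
    htend.eventually (hΩ.eventually_mem hp)
  set φ : ℝ × ℝ → ℝ := fun q => fderiv ℝ f q v with hφ
  have hφd : DifferentiableAt ℝ φ p := aux_diff_pd hΩ hp hf v
  set g : ℝ → ℝ := fun s => f (c s) with hgdef
  have hg : ∀ᶠ s in nhds (0:ℝ), HasDerivAt g (φ (c s)) s := by
    filter_upwards [hmemΩ] with s hs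
    exact ((hdiff _ hs).hasFDerivAt).comp_hasDerivAt s (hcd s)
  have hh : HasDerivAt (fun s => φ (c s)) (fderiv ℝ φ p v) 0 := by
    have h' : HasFDerivAt φ (fderiv ℝ φ p) (c 0) := by rw [hc0]; exact hφd.hasFDerivAt
    exact h'.comp_hasDerivAt 0 (hcd 0)
  have hgmin : IsLocalMin g 0 := by
    have := htend.eventually hmin
    filter_upwards [this] with s hs
    simpa [hgdef, hc0] using hs
  have h0 : φ (c 0) = 0 := by
    rw [hc0, hφ]
    simp [hmin.fderiv_eq_zero]
  exact aux_second_deriv_nonneg hg hgmin hh h0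

/-- Linearity of the total derivative, expressed with `pdx`, `pdy`. -/
lemma aux_fderiv_apply (g : ℝ × ℝ → ℝ) (p : ℝ × ℝ) (v : ℝ × ℝ) :
    fderiv ℝ g p v = v.1 * pdx g p + v.2 * pdy g p := by
  have hv : v = v.1 • ((1,0) : ℝ × ℝ) + v.2 • ((0,1) : ℝ × ℝ) := by
    simp [Prod.ext_iff]
  calc fderiv ℝ g p v = fderiv ℝ g p (v.1 • ((1,0) : ℝ × ℝ) + v.2 • ((0,1) : ℝ × ℝ)) := by
        rw [← hv]
    _ = v.1 * pdx g p + v.2 * pdy g p := by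
        rw [map_add, map_smul, map_smul]; simp [pdx, pdy]

/-- Expansion of the second directional derivative in terms of iterated partials. -/
lemma aux_quad_expand {f : ℝ × ℝ → ℝ} {Ω : Set (ℝ × ℝ)} (hΩ : IsOpen Ω) {p : ℝ × ℝ}
    (hp : p ∈ Ω) (hf : ContDiffOn ℝ 2 f Ω) (v : ℝ × ℝ) :
    fderiv ℝ (fun q => fderiv ℝ f q v) p v
      = v.1 ^ 2 * pdx (pdx f) p + v.1 * v.2 * (pdy (pdx f) p + pdx (pdy f) p)
        + v.2 ^ 2 * pdy (pdy f) p := by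
  have hdx : DifferentiableAt ℝ (pdx f) p := aux_diff_pd hΩ hp hf _
  have hdy : DifferentiableAt ℝ (pdy f) p := aux_diff_pd hΩ hp hf _
  have hfun : (fun q => fderiv ℝ f q v) = fun q => v.1 * pdx f q + v.2 * pdy f q := by
    funext q; exact aux_fderiv_apply f q v
  rw [hfun]
  have hD : fderiv ℝ (fun q => v.1 * pdx f q + v.2 * pdy f q) p
      = v.1 • fderiv ℝ (pdx f) p + v.2 • fderiv ℝ (pdy f) p := by
    rw [fderiv_fun_add ((hdx.const_mul _)) ((hdy.const_mul _)),
      fderiv_const_mul hdx, fderiv_const_mul hdy]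
  rw [hD]
  simp only [ContinuousLinearMap.add_apply, ContinuousLinearMap.coe_smul', Pi.smul_apply,
    smul_eq_mul]
  rw [aux_fderiv_apply (pdx f) p v, aux_fderiv_apply (pdy f) p v]
  ring

/-- Solutions of `Q_t[u] = 0` with the same boundary values are strictly ordered in a
decreasing way with respect to `t`. -/
theorem Qt_solutions_ordered (Ω : Set (ℝ × ℝ)) (hΩo : IsOpen Ω) (hΩc : IsConnected Ω)
    (hΩb : Bornology.IsBounded Ω) (t₁ t₂ : ℝ) (ht₀ : 0 ≤ t₁) (ht : t₁ < t₂) (ht₁ : t₂ ≤ 1)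
    (u₁ u₂ : ℝ × ℝ → ℝ)
    (hu₁2 : ContDiffOn ℝ 2 u₁ Ω) (hu₁0 : ContinuousOn u₁ (closure Ω))
    (hu₂2 : ContDiffOn ℝ 2 u₂ Ω) (hu₂0 : ContinuousOn u₂ (closure Ω))
    (hQ₁ : ∀ p ∈ Ω, Qtop t₁ u₁ p = 0) (hQ₂ : ∀ p ∈ Ω, Qtop t₂ u₂ p = 0)
    (hbd : ∀ p ∈ frontier Ω, u₁ p = u₂ p) :
    ∀ p ∈ Ω, u₂ p < u₁ p := by
  by_contra hcon
  push_neg at hcon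
  obtain ⟨p₀, hp₀, hle⟩ := hcon
  -- Find an interior maximum point of `w = u₂ - u₁`.
  have hwc : ContinuousOn (fun q => u₂ q - u₁ q) (closure Ω) := hu₂0.sub hu₁0
  have hcompact : IsCompact (closure Ω) := hΩb.isCompact_closure
  have hne : (closure Ω).Nonempty := ⟨p₀, subset_closure hp₀⟩
  obtain ⟨q, hq, hqmax⟩ := hcompact.exists_isMaxOn hne hwc
  have hw0 : (0:ℝ) ≤ u₂ p₀ - u₁ p₀ := by linarith
  obtain ⟨p, hpΩ, hpmax⟩ : ∃ p ∈ Ω, ∀ x ∈ closure Ω, u₂ x - u₁ x ≤ u₂ p - u₁ p := by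
    by_cases hqΩ : q ∈ Ω
    · exact ⟨q, hqΩ, fun x hx => hqmax hx⟩
    · have hqf : q ∈ frontier Ω := by
        rw [hΩo.frontier_eq]; exact ⟨hq, hqΩ⟩
      have hwq : u₂ q - u₁ q = 0 := by rw [← hbd q hqf]; ring
      refine ⟨p₀, hp₀, fun x hx => ?_⟩
      have h1 : u₂ x - u₁ x ≤ u₂ q - u₁ q := hqmax hx
      linarith
  -- `w' = u₁ - u₂` has a local minimum at `p`.
  set w' : ℝ × ℝ → ℝ := fun q => u₁ q - u₂ q with hw'def
  have hw'2 : ContDiffOn ℝ 2 w' Ω := by rw [hw'def]; exact hu₁2.sub hu₂2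
  have hlm : IsLocalMin w' p :=
    Filter.eventually_of_mem (hΩo.mem_nhds hpΩ) (fun x hx => by
      have := hpmax x (subset_closure hx)
      simp only [hw'def]
      linarith)
  -- First derivatives coincide at `p`.
  have hd1 : DifferentiableAt ℝ u₁ p :=
    (hu₁2.contDiffAt (hΩo.mem_nhds hpΩ)).differentiableAt two_ne_zero
  have hd2 : DifferentiableAt ℝ u₂ p :=
    (hu₂2.contDiffAt (hΩo.mem_nhds hpΩ)).differentiableAt two_ne_zero
  have h0 : fderiv ℝ w' p = 0 := hlm.fderiv_eq_zero
  have hsub : fderiv ℝ w' p = fderiv ℝ u₁ p - fderiv ℝ u₂ p := by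
    rw [hw'def]; exact fderiv_sub hd1 hd2
  have hgrad : fderiv ℝ u₂ p = fderiv ℝ u₁ p := by
    rw [hsub] at h0; exact (sub_eq_zero.mp h0).symm
  have ha : pdx u₂ p = pdx u₁ p := by simp only [pdx, hgrad]
  have hb : pdy u₂ p = pdy u₁ p := by simp only [pdy, hgrad]
  -- Second derivatives of `w'` are differences of those of `u₁`, `u₂`.
  have hev : ∀ v : ℝ × ℝ, (fun q => fderiv ℝ w' q v)
      =ᶠ[nhds p] fun q => fderiv ℝ u₁ q v - fderiv ℝ u₂ q v := by
    intro v
    filter_upwards [hΩo.eventually_mem hpΩ] with x hx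
    have d1 : DifferentiableAt ℝ u₁ x :=
      (hu₁2.contDiffAt (hΩo.mem_nhds hx)).differentiableAt two_ne_zero
    have d2 : DifferentiableAt ℝ u₂ x :=
      (hu₂2.contDiffAt (hΩo.mem_nhds hx)).differentiableAt two_ne_zero
    rw [hw'def, fderiv_fun_sub d1 d2]
    simp
  have hsd : ∀ v z : ℝ × ℝ, fderiv ℝ (fun q => fderiv ℝ w' q v) p z
      = fderiv ℝ (fun q => fderiv ℝ u₁ q v) p z - fderiv ℝ (fun q => fderiv ℝ u₂ q v) p z := by
    intro v z
    rw [(hev v).fderiv_eq,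
      fderiv_fun_sub (aux_diff_pd hΩo hpΩ hu₁2 v) (aux_diff_pd hΩo hpΩ hu₂2 v)]
    simp
  have hpdx : ∀ g : ℝ × ℝ → ℝ, pdx g = fun q => fderiv ℝ g q ((1,0) : ℝ × ℝ) := fun _ => rfl
  have hpdy : ∀ g : ℝ × ℝ → ℝ, pdy g = fun q => fderiv ℝ g q ((0,1) : ℝ × ℝ) := fun _ => rfl
  have hxx : pdx (pdx w') p = pdx (pdx u₁) p - pdx (pdx u₂) p := by
    simp only [hpdx]; exact hsd (1,0) (1,0)
  have hyy : pdy (pdy w') p = pdy (pdy u₁) p - pdy (pdy u₂) p := by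
    simp only [hpdy]; exact hsd (0,1) (0,1)
  have hyx : pdy (pdx w') p = pdy (pdx u₁) p - pdy (pdx u₂) p := by
    simp only [hpdx, hpdy]; exact hsd (1,0) (0,1)
  have hxy : pdx (pdy w') p = pdx (pdy u₁) p - pdx (pdy u₂) p := by
    simp only [hpdx, hpdy]; exact hsd (0,1) (1,0)
  -- The Hessian quadratic form of `w'` at `p` is positive semidefinite.
  have hquad : ∀ v : ℝ × ℝ, 0 ≤ v.1 ^ 2 * pdx (pdx w') p
      + v.1 * v.2 * (pdy (pdx w') p + pdx (pdy w') p) + v.2 ^ 2 * pdy (pdy w') p := by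
    intro v
    have hnn := aux_quad_nonneg hΩo hpΩ hw'2 hlm v
    rwa [aux_quad_expand hΩo hpΩ hw'2 v] at hnn
  have h1 : (0:ℝ) ≤ (1:ℝ) ^ 2 * pdx (pdx w') p
      + 1 * 0 * (pdy (pdx w') p + pdx (pdy w') p) + (0:ℝ) ^ 2 * pdy (pdy w') p :=
    hquad (1,0)
  have h2 : (0:ℝ) ≤ (0:ℝ) ^ 2 * pdx (pdx w') p
      + 0 * 1 * (pdy (pdx w') p + pdx (pdy w') p) + (1:ℝ) ^ 2 * pdy (pdy w') p :=
    hquad (0,1)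
  have h3 : (0:ℝ) ≤ (pdy u₁ p) ^ 2 * pdx (pdx w') p
      + pdy u₁ p * (-(pdx u₁ p)) * (pdy (pdx w') p + pdx (pdy w') p)
      + (-(pdx u₁ p)) ^ 2 * pdy (pdy w') p :=
    hquad (pdy u₁ p, -(pdx u₁ p))
  -- Subtract the two equations at `p`.
  have e₁ := hQ₁ p hpΩ
  have e₂ := hQ₂ p hpΩ
  simp only [Qtop, gradSq] at e₁ e₂
  rw [ha, hb] at e₂
  have eqn : (1 + ((pdx u₁ p) ^ 2 + (pdy u₁ p) ^ 2)) * (pdx (pdx w') p + pdy (pdy w') p)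
      - ((pdx u₁ p) ^ 2 * pdx (pdx w') p
        + pdx u₁ p * pdy u₁ p * pdy (pdx w') p
        + pdy u₁ p * pdx u₁ p * pdx (pdy w') p
        + (pdy u₁ p) ^ 2 * pdy (pdy w') p)
      = (t₁ - t₂) * (1 + ((pdx u₁ p) ^ 2 + (pdy u₁ p) ^ 2)) := by
    rw [hxx, hyy, hyx, hxy]
    linear_combination e₁ - e₂
  have hneg : (t₁ - t₂) * (1 + ((pdx u₁ p) ^ 2 + (pdy u₁ p) ^ 2)) < 0 :=
    mul_neg_of_neg_of_pos (by linarith) (by positivity)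
  linarith [h1, h2, h3, eqn, hneg]
end
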